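/- Let 𝕜 be a commutative ring and n ≥ 1 an integer. Consider the cochain complex of 𝕜-modules C^0 → C^1 → ⋯ → C^n, where C^0 = 𝕜, C^m = 𝕜 ⊕ 𝕜 for 1 ≤ m ≤ n−1, C^n = 𝕜, with differentials: d^0(x) = (x, x) if n ≥ 2 (and d^0 = id_𝕜 if n = 1); d^m(x, y) = (x − y, x − y) for 1 ≤ m ≤ n−2; and d^{n−1}(x, y) = x − y for n ≥ 2. Then this complex is exact: d^0 is injective, ker d^m = im d^{m−1} for every 1 ≤ m ≤ n−1, and d^{n−1} is surjective. -/
import Mathlib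


/-- **Exactness of the degree-`n` strand complex.**
For `n ≥ 1`, the complex `C⁰ → C¹ → ⋯ → Cⁿ` with `C⁰ = 𝕜`, `Cᵐ = 𝕜 ⊕ 𝕜` for
`1 ≤ m ≤ n-1`, `Cⁿ = 𝕜`, and differentials `d⁰(x) = (x,x)` (with `d⁰ = id` if
`n = 1`), `dᵐ(x,y) = (x-y, x-y)` for `1 ≤ m ≤ n-2`, `d^{n-1}(x,y) = x - y`, is
exact: the first differential is injective, the kernel of each differential
equals the image of the preceding one, and the last differential is surjective.
(The claims are expressed by cases on the shape of the complex, i.e. on `n`.) -/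
theorem stmt_13 (𝕜 : Type*) [CommRing 𝕜] (n : ℕ) (hn : 1 ≤ n)
    (d0 : 𝕜 →ₗ[𝕜] 𝕜 × 𝕜) (hd0 : ∀ x, d0 x = (x, x))
    (δ : 𝕜 × 𝕜 →ₗ[𝕜] 𝕜 × 𝕜) (hδ : ∀ p, δ p = (p.1 - p.2, p.1 - p.2))
    (dl : 𝕜 × 𝕜 →ₗ[𝕜] 𝕜) (hdl : ∀ p, dl p = p.1 - p.2) :
    -- `n = 1`: the complex is `𝕜 → 𝕜` with differential the identity, which is exact
    (n = 1 → Function.Injective (LinearMap.id : 𝕜 →ₗ[𝕜] 𝕜) ∧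
      Function.Surjective (LinearMap.id : 𝕜 →ₗ[𝕜] 𝕜)) ∧
    -- `n ≥ 2`: `d⁰ = d0` is injective and `d^{n-1} = dl` is surjective
    (2 ≤ n → Function.Injective d0 ∧ Function.Surjective dl) ∧
    -- `n = 2`: exactness at `C¹` means `ker d¹ = im d⁰` with `d¹ = dl`, `d⁰ = d0`
    (n = 2 → LinearMap.ker dl = LinearMap.range d0) ∧
    -- `n ≥ 3`: exactness at `C¹` (`ker δ = im d0`) and at `C^{n-1}` (`ker dl = im δ`)
    (3 ≤ n → LinearMap.ker δ = LinearMap.range d0 ∧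
      LinearMap.ker dl = LinearMap.range δ) ∧
    -- `n ≥ 4`: exactness at the middle terms `C^m`, `2 ≤ m ≤ n-2` (`ker δ = im δ`)
    (4 ≤ n → LinearMap.ker δ = LinearMap.range δ) := by
  have hkdl : ∀ p : 𝕜 × 𝕜, p ∈ LinearMap.ker dl ↔ p.1 = p.2 := by
    intro p
    simp [LinearMap.mem_ker, hdl, sub_eq_zero]
  have hkδ : ∀ p : 𝕜 × 𝕜, p ∈ LinearMap.ker δ ↔ p.1 = p.2 := by
    intro p
    constructor
    · intro h
      have := congrArg Prod.fst ((LinearMap.mem_ker).1 h)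
      rw [hδ] at this
      exact sub_eq_zero.mp this
    · intro h
      simp [LinearMap.mem_ker, hδ, h, Prod.ext_iff]
  have hrd0 : ∀ p : 𝕜 × 𝕜, p ∈ LinearMap.range d0 ↔ p.1 = p.2 := by
    intro p
    constructor
    · rintro ⟨x, rfl⟩; rw [hd0]
    · intro h
      exact ⟨p.1, by rw [hd0]; exact Prod.ext rfl h⟩
  have hrδ : ∀ p : 𝕜 × 𝕜, p ∈ LinearMap.range δ ↔ p.1 = p.2 := by
    intro p
    constructor
    · rintro ⟨x, rfl⟩; rw [hδ]
    · intro h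
      exact ⟨(p.1, 0), by rw [hδ]; simp; exact Prod.ext rfl h⟩
  have kerdl_rd0 : LinearMap.ker dl = LinearMap.range d0 := by
    ext p; rw [hkdl, hrd0]
  have kerdl_rδ : LinearMap.ker dl = LinearMap.range δ := by
    ext p; rw [hkdl, hrδ]
  have kerδ_rd0 : LinearMap.ker δ = LinearMap.range d0 := by
    ext p; rw [hkδ, hrd0]
  have kerδ_rδ : LinearMap.ker δ = LinearMap.range δ := by
    ext p; rw [hkδ, hrδ]
  refine ⟨fun _ => ⟨fun a b h => h, fun x => ⟨x, rfl⟩⟩, fun _ => ⟨?_, ?_⟩,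
    fun _ => kerdl_rd0, fun _ => ⟨kerδ_rd0, kerdl_rδ⟩, fun _ => kerδ_rδ⟩
  · intro a b h
    have := congrArg Prod.fst h
    rwa [hd0, hd0] at this
  · intro x
    exact ⟨(x, 0), by rw [hdl]; simp⟩
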